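/- Define u(y₁,y₂) := y₁/√2 + (√6/2)·y₂ and v(y₁,y₂) := −y₁/√2 + (√6/2)·y₂, and define X = (X¹, X²) with X¹(y₁,y₂) := −4·( √2·cot(√2·y₁) + (√2 − 1/√2)·cot(u(y₁,y₂)) − (1/√2)·cot(v(y₁,y₂)) ) and X²(y₁,y₂) := −2√6·( cot(u(y₁,y₂)) + cot(v(y₁,y₂)) ). Then at every point (y₁,y₂) with √2·y₁ ∈ (0,π), u(y₁,y₂) ∈ (0,π) and v(y₁,y₂) ∈ (0,π), the divergence ∂X¹/∂y₁ + ∂X²/∂y₂ equals 8·( 1/sin²(√2·y₁) + 1/sin²(u(y₁,y₂)) + 1/sin²(v(y₁,y₂)) ); in particular it is strictly positive. -/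

import Mathlib

open Real

noncomputable def uCoord (y₁ y₂ : ℝ) : ℝ := y₁ / Real.sqrt 2 + (Real.sqrt 6 / 2) * y₂

noncomputable def vCoord (y₁ y₂ : ℝ) : ℝ := -y₁ / Real.sqrt 2 + (Real.sqrt 6 / 2) * y₂

/-- First component of the mean curvature vector field of the parallel orbits of the
isotropy action of `Sp(3)` on `SU(6)/Sp(3)`, in orthonormal coordinates. -/
noncomputable def XOne (y₁ y₂ : ℝ) : ℝ :=
  -4 * (Real.sqrt 2 * Real.cot (Real.sqrt 2 * y₁) +
        (Real.sqrt 2 - 1 / Real.sqrt 2) * Real.cot (uCoord y₁ y₂) -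
        (1 / Real.sqrt 2) * Real.cot (vCoord y₁ y₂))

/-- Second component of the mean curvature vector field. -/
noncomputable def XTwo (y₁ y₂ : ℝ) : ℝ :=
  -2 * Real.sqrt 6 * (Real.cot (uCoord y₁ y₂) + Real.cot (vCoord y₁ y₂))

/-- At every point with `√2 y₁ ∈ (0,π)`, `u(y₁,y₂) ∈ (0,π)` and `v(y₁,y₂) ∈ (0,π)`, the
divergence `∂X¹/∂y₁ + ∂X²/∂y₂` equals
`8 (1/sin²(√2 y₁) + 1/sin²(u(y₁,y₂)) + 1/sin²(v(y₁,y₂)))`; in particular it is positive. -/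
lemma myCot (x : ℝ) (hx : Real.sin x ≠ 0) :
    HasDerivAt Real.cot (-1 / Real.sin x ^ 2) x := by
  have h := (Real.hasDerivAt_cos x).div (Real.hasDerivAt_sin x) hx
  have he : Real.cot = fun x => Real.cos x / Real.sin x :=
    funext fun x => Real.cot_eq_cos_div_sin x
  rw [he]
  refine h.congr_deriv ?_
  have hp := Real.sin_sq_add_cos_sq x
  have hs2 : Real.sin x ^ 2 ≠ 0 := pow_ne_zero 2 hx
  rw [div_eq_div_iff hs2 hs2]
  nlinarith [hp]

theorem stmt_7 (y₁ y₂ : ℝ)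
    (h1 : Real.sqrt 2 * y₁ ∈ Set.Ioo 0 π)
    (h2 : uCoord y₁ y₂ ∈ Set.Ioo 0 π)
    (h3 : vCoord y₁ y₂ ∈ Set.Ioo 0 π) :
    ∃ d₁ d₂ : ℝ,
      HasDerivAt (fun y => XOne y y₂) d₁ y₁ ∧
      HasDerivAt (fun y => XTwo y₁ y) d₂ y₂ ∧
      d₁ + d₂ = 8 * (1 / (Real.sin (Real.sqrt 2 * y₁)) ^ 2 +
                     1 / (Real.sin (uCoord y₁ y₂)) ^ 2 +
                     1 / (Real.sin (vCoord y₁ y₂)) ^ 2) ∧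
      0 < d₁ + d₂ := by
  have hs : 0 < Real.sin (Real.sqrt 2 * y₁) := Real.sin_pos_of_pos_of_lt_pi h1.1 h1.2
  have hsu : 0 < Real.sin (uCoord y₁ y₂) := Real.sin_pos_of_pos_of_lt_pi h2.1 h2.2
  have hsv : 0 < Real.sin (vCoord y₁ y₂) := Real.sin_pos_of_pos_of_lt_pi h3.1 h3.2
  set A := (1 : ℝ) / Real.sin (Real.sqrt 2 * y₁) ^ 2 with hA
  set B := (1 : ℝ) / Real.sin (uCoord y₁ y₂) ^ 2 with hB
  set C := (1 : ℝ) / Real.sin (vCoord y₁ y₂) ^ 2 with hC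
  have hr2 : Real.sqrt 2 * Real.sqrt 2 = 2 := Real.mul_self_sqrt (by norm_num)
  have hr6 : Real.sqrt 6 * Real.sqrt 6 = 6 := Real.mul_self_sqrt (by norm_num)
  have hr2ne : Real.sqrt 2 ≠ 0 := by positivity
  -- inner derivatives in y₁
  have hin1 : HasDerivAt (fun y : ℝ => Real.sqrt 2 * y) (Real.sqrt 2) y₁ := by
    simpa using (hasDerivAt_id y₁).const_mul (Real.sqrt 2)
  have hinu : HasDerivAt (fun y : ℝ => uCoord y y₂) (1 / Real.sqrt 2) y₁ := by
    unfold uCoord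
    simpa using ((hasDerivAt_id y₁).div_const (Real.sqrt 2)).add_const ((Real.sqrt 6 / 2) * y₂)
  have hinv : HasDerivAt (fun y : ℝ => vCoord y y₂) (-1 / Real.sqrt 2) y₁ := by
    unfold vCoord
    have := (((hasDerivAt_id y₁).neg).div_const (Real.sqrt 2)).add_const
      ((Real.sqrt 6 / 2) * y₂)
    simpa [neg_div] using this
  -- inner derivatives in y₂
  have hinu2 : HasDerivAt (fun y : ℝ => uCoord y₁ y) (Real.sqrt 6 / 2) y₂ := by
    unfold uCoord
    simpa using (((hasDerivAt_id y₂).const_mul (Real.sqrt 6 / 2)).const_add (y₁ / Real.sqrt 2))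
  have hinv2 : HasDerivAt (fun y : ℝ => vCoord y₁ y) (Real.sqrt 6 / 2) y₂ := by
    unfold vCoord
    simpa using (((hasDerivAt_id y₂).const_mul (Real.sqrt 6 / 2)).const_add (-y₁ / Real.sqrt 2))
  -- cot compositions
  have hc1 : HasDerivAt (fun y : ℝ => Real.cot (Real.sqrt 2 * y))
      ((-A) * Real.sqrt 2) y₁ := by
    have := (myCot _ hs.ne').comp y₁ hin1
    simpa [hA, neg_div, Function.comp_def] using this
  have hcu : HasDerivAt (fun y : ℝ => Real.cot (uCoord y y₂))
      ((-B) * (1 / Real.sqrt 2)) y₁ := by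
    have := (myCot _ hsu.ne').comp y₁ hinu
    simpa [hB, neg_div, Function.comp_def] using this
  have hcv : HasDerivAt (fun y : ℝ => Real.cot (vCoord y y₂))
      ((-C) * (-1 / Real.sqrt 2)) y₁ := by
    have := (myCot _ hsv.ne').comp y₁ hinv
    simpa [hC, neg_div, Function.comp_def] using this
  have hcu2 : HasDerivAt (fun y : ℝ => Real.cot (uCoord y₁ y))
      ((-B) * (Real.sqrt 6 / 2)) y₂ := by
    have := (myCot _ hsu.ne').comp y₂ hinu2
    simpa [hB, neg_div, Function.comp_def] using this
  have hcv2 : HasDerivAt (fun y : ℝ => Real.cot (vCoord y₁ y))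
      ((-C) * (Real.sqrt 6 / 2)) y₂ := by
    have := (myCot _ hsv.ne').comp y₂ hinv2
    simpa [hC, neg_div, Function.comp_def] using this
  refine ⟨8 * A + 2 * B + 2 * C, 6 * B + 6 * C, ?_, ?_, ?_, ?_⟩
  · have hD : HasDerivAt (fun y => XOne y y₂)
        (-4 * (Real.sqrt 2 * ((-A) * Real.sqrt 2) +
          (Real.sqrt 2 - 1 / Real.sqrt 2) * ((-B) * (1 / Real.sqrt 2)) -
          (1 / Real.sqrt 2) * ((-C) * (-1 / Real.sqrt 2)))) y₁ := by
      unfold XOne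
      exact (((hc1.const_mul (Real.sqrt 2)).add
        (hcu.const_mul (Real.sqrt 2 - 1 / Real.sqrt 2))).sub
        (hcv.const_mul (1 / Real.sqrt 2))).const_mul (-4)
    convert hD using 1
    field_simp
    ring_nf
    have h4 : Real.sqrt 2 ^ 2 = 2 := Real.sq_sqrt (by norm_num)
    have h44 : Real.sqrt 2 ^ 4 = 4 := by
      rw [show (4:ℕ) = 2 * 2 from rfl, pow_mul, h4]; norm_num
    simp only [h44, h4]
    ring
  · have hD : HasDerivAt (fun y => XTwo y₁ y)
        (-2 * Real.sqrt 6 * ((-B) * (Real.sqrt 6 / 2) + (-C) * (Real.sqrt 6 / 2))) y₂ := by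
      unfold XTwo
      exact (hcu2.add hcv2).const_mul (-2 * Real.sqrt 6)
    convert hD using 1
    linear_combination (-(B + C)) * hr6
  · ring
  · have hA0 : 0 < A := by positivity
    have hB0 : 0 < B := by positivity
    have hC0 : 0 < C := by positivity
    linarith
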